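/- Let v_I ∈ ℝ^{n×p_I}, v_J ∈ ℝ^{n×p_J} with v_II := v_I⊤v_I and v_JJ := v_J⊤v_J positive definite, and let θ̄*_I ∈ ℝ^{p_I}, θ̄*_J ∈ ℝ^{p_J} be arbitrary vectors. Set μ := v_Iθ̄*_I + v_Jθ̄*_J ∈ ℝⁿ and define m(ρ) ∈ ℝ^{p_I} as the first block of G(ρ)⁻¹·(v_I⊤μ; v_J⊤μ), i.e., the conditional mean of the mutual-learning estimator θ̂_I(ρ) when Y has conditional mean μ given the latent representations. Then (i) m(0) = θ̄*_I + v_II⁻¹v_IJθ̄*_J, and (ii) the map ρ ↦ m(ρ) is differentiable at ρ = 0 with derivative m′(0) = v_II⁻¹v_IJv_JJ⁻¹v_JIθ̄*_I − θ̄*_I. -/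

import Mathlib

open Matrix

/-- The block matrix `G(ρ) = [[(1+ρ)v_II, −ρ v_IJ], [−ρ v_JI, (1+ρ)v_JJ]]`. -/
def mlG {n pI pJ : ℕ} (vI : Matrix (Fin n) (Fin pI) ℝ)
    (vJ : Matrix (Fin n) (Fin pJ) ℝ) (ρ : ℝ) :
    Matrix (Fin pI ⊕ Fin pJ) (Fin pI ⊕ Fin pJ) ℝ :=
  Matrix.fromBlocks ((1 + ρ) • (vIᵀ * vI)) ((-ρ) • (vIᵀ * vJ))
    ((-ρ) • (vJᵀ * vI)) ((1 + ρ) • (vJᵀ * vJ))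

/-- The conditional mean `m(ρ)`: the first block of `G(ρ)⁻¹ (v_Iᵀ μ; v_Jᵀ μ)`, where
`μ = v_I θ̄*_I + v_J θ̄*_J`. -/
noncomputable def condMeanI {n pI pJ : ℕ} (vI : Matrix (Fin n) (Fin pI) ℝ)
    (vJ : Matrix (Fin n) (Fin pJ) ℝ) (θbI : Fin pI → ℝ) (θbJ : Fin pJ → ℝ)
    (ρ : ℝ) : Fin pI → ℝ :=
  fun i => ((mlG vI vJ ρ)⁻¹ *ᵥ
    Sum.elim (vIᵀ *ᵥ (vI *ᵥ θbI + vJ *ᵥ θbJ)) (vJᵀ *ᵥ (vI *ᵥ θbI + vJ *ᵥ θbJ))) (Sum.inl i)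

attribute [local instance] Matrix.linftyOpNormedAddCommGroup Matrix.linftyOpNormedRing
  Matrix.linftyOpNormedAlgebra

/-- With `v_II` and `v_JJ` positive definite and arbitrary
`θ̄*_I ∈ ℝ^{p_I}`, `θ̄*_J ∈ ℝ^{p_J}`:
(i) `m(0) = θ̄*_I + v_II⁻¹ v_IJ θ̄*_J`, and
(ii) `ρ ↦ m(ρ)` is differentiable at `0` with derivative
`v_II⁻¹ v_IJ v_JJ⁻¹ v_JI θ̄*_I − θ̄*_I`. -/
theorem condMeanI_value_and_deriv_at_zero
    (n pI pJ : ℕ) (vI : Matrix (Fin n) (Fin pI) ℝ) (vJ : Matrix (Fin n) (Fin pJ) ℝ)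
    (hI : (vIᵀ * vI).PosDef) (hJ : (vJᵀ * vJ).PosDef)
    (θbI : Fin pI → ℝ) (θbJ : Fin pJ → ℝ) :
    condMeanI vI vJ θbI θbJ 0 = θbI + (vIᵀ * vI)⁻¹ *ᵥ ((vIᵀ * vJ) *ᵥ θbJ) ∧
    HasDerivAt (fun ρ => condMeanI vI vJ θbI θbJ ρ)
      ((vIᵀ * vI)⁻¹ *ᵥ ((vIᵀ * vJ) *ᵥ ((vJᵀ * vJ)⁻¹ *ᵥ ((vJᵀ * vI) *ᵥ θbI))) - θbI) 0 := by
  classical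
  set A := vIᵀ * vI with hAdef
  set B := vIᵀ * vJ with hBdef
  set C := vJᵀ * vI with hCdef
  set D := vJᵀ * vJ with hDdef
  have hA : IsUnit A.det := isUnit_iff_ne_zero.mpr hI.det_pos.ne'
  have hD : IsUnit D.det := isUnit_iff_ne_zero.mpr hJ.det_pos.ne'
  set G0 : Matrix (Fin pI ⊕ Fin pJ) (Fin pI ⊕ Fin pJ) ℝ := fromBlocks A 0 0 D with hG0def
  set Gd : Matrix (Fin pI ⊕ Fin pJ) (Fin pI ⊕ Fin pJ) ℝ := fromBlocks A (-B) (-C) D with hGddef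
  have hGeq : ∀ ρ : ℝ, mlG vI vJ ρ = G0 + ρ • Gd := by
    intro ρ
    rw [hG0def, hGddef, mlG, Matrix.fromBlocks_smul, Matrix.fromBlocks_add]
    refine Matrix.ext fun i j => ?_
    cases i <;> cases j <;>
      simp [Matrix.fromBlocks, Matrix.add_apply, Matrix.smul_apply, smul_eq_mul, hAdef, hBdef, hCdef, hDdef] <;> ring
  have hG0unit : IsUnit G0 := by
    rw [Matrix.isUnit_iff_isUnit_det, hG0def, Matrix.det_fromBlocks_zero₂₁]
    exact hA.mul hD
  have hG0inv : G0⁻¹ = fromBlocks A⁻¹ 0 0 D⁻¹ := by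
    apply Matrix.inv_eq_right_inv
    rw [hG0def, Matrix.fromBlocks_multiply]
    simp [Matrix.mul_nonsing_inv _ hA, Matrix.mul_nonsing_inv _ hD, Matrix.fromBlocks_one]
  -- the vector b
  set b : (Fin pI ⊕ Fin pJ) → ℝ :=
    Sum.elim (vIᵀ *ᵥ (vI *ᵥ θbI + vJ *ᵥ θbJ)) (vJᵀ *ᵥ (vI *ᵥ θbI + vJ *ᵥ θbJ)) with hbdef
  have hb : b = Sum.elim (A *ᵥ θbI + B *ᵥ θbJ) (C *ᵥ θbI + D *ᵥ θbJ) := by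
    rw [hbdef]
    simp [Matrix.mulVec_add, Matrix.mulVec_mulVec]
    rfl
  -- linear map extracting the first block of M *ᵥ b
  set L : Matrix (Fin pI ⊕ Fin pJ) (Fin pI ⊕ Fin pJ) ℝ →ₗ[ℝ] (Fin pI → ℝ) :=
    { toFun := fun M => fun i => (M *ᵥ b) (Sum.inl i)
      map_add' := by intro M N; funext i; simp [Matrix.add_mulVec]
      map_smul' := by intro c M; funext i; simp [Matrix.smul_mulVec] } with hLdef
  have hmL : ∀ ρ : ℝ, condMeanI vI vJ θbI θbJ ρ = L ((mlG vI vJ ρ)⁻¹) := fun ρ => rfl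
  -- value of G0⁻¹ *ᵥ b
  have hAiA : ∀ x : Fin pI → ℝ, A⁻¹ *ᵥ (A *ᵥ x) = x := by
    intro x; rw [Matrix.mulVec_mulVec, Matrix.nonsing_inv_mul _ hA, Matrix.one_mulVec]
  have hDiD : ∀ x : Fin pJ → ℝ, D⁻¹ *ᵥ (D *ᵥ x) = x := by
    intro x; rw [Matrix.mulVec_mulVec, Matrix.nonsing_inv_mul _ hD, Matrix.one_mulVec]
  have hAAi : ∀ x : Fin pI → ℝ, A *ᵥ (A⁻¹ *ᵥ x) = x := by
    intro x; rw [Matrix.mulVec_mulVec, Matrix.mul_nonsing_inv _ hA, Matrix.one_mulVec]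
  have hDDi : ∀ x : Fin pJ → ℝ, D *ᵥ (D⁻¹ *ᵥ x) = x := by
    intro x; rw [Matrix.mulVec_mulVec, Matrix.mul_nonsing_inv _ hD, Matrix.one_mulVec]
  have hx : G0⁻¹ *ᵥ b = Sum.elim (θbI + A⁻¹ *ᵥ (B *ᵥ θbJ)) (D⁻¹ *ᵥ (C *ᵥ θbI) + θbJ) := by
    rw [hG0inv, hb, Matrix.fromBlocks_mulVec]
    simp only [Sum.elim_comp_inl, Sum.elim_comp_inr, Matrix.zero_mulVec, add_zero, zero_add]
    rw [Matrix.mulVec_add, Matrix.mulVec_add, hAiA, hDiD]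
  -- part (i)
  have hval : condMeanI vI vJ θbI θbJ 0 = θbI + A⁻¹ *ᵥ (B *ᵥ θbJ) := by
    rw [hmL 0]
    have h0 : mlG vI vJ 0 = G0 := by rw [hGeq 0]; simp
    funext i
    show ((mlG vI vJ 0)⁻¹ *ᵥ b) (Sum.inl i) = _
    rw [h0, hx]
    rfl
  refine ⟨hval, ?_⟩
  -- part (ii): differentiability
  have hGder : HasDerivAt (fun ρ : ℝ => mlG vI vJ ρ) Gd 0 := by
    have h1 : HasDerivAt (fun ρ : ℝ => G0 + ρ • Gd) ((1 : ℝ) • Gd) 0 :=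
      ((hasDerivAt_id (0 : ℝ)).smul_const Gd).const_add G0
    simp only [one_smul] at h1
    exact h1.congr_deriv rfl |>.congr_of_eventuallyEq (by
      filter_upwards with ρ using (hGeq ρ).symm ▸ rfl)
  -- inverse is differentiable
  have hG00 : mlG vI vJ 0 = G0 := by rw [hGeq 0]; simp
  have hinv : HasDerivAt (fun ρ : ℝ => Ring.inverse (mlG vI vJ ρ))
      (-(G0⁻¹ * Gd * G0⁻¹)) 0 := by
    have hf := hasFDerivAt_ringInverse (𝕜 := ℝ) hG0unit.unit
    rw [hG0unit.unit_spec] at hf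
    have hf' : HasFDerivAt (Ring.inverse)
        (-(ContinuousLinearMap.mulLeftRight ℝ (Matrix (Fin pI ⊕ Fin pJ) (Fin pI ⊕ Fin pJ) ℝ))
          ↑hG0unit.unit⁻¹ ↑hG0unit.unit⁻¹) (mlG vI vJ 0) := by
      rw [hG00]; exact hf
    have hcomp := hf'.comp_hasDerivAt 0 hGder
    simp only [ContinuousLinearMap.neg_apply, ContinuousLinearMap.mulLeftRight_apply,
      Matrix.coe_units_inv, hG0unit.unit_spec] at hcomp
    convert hcomp using 2 <;> rfl
  simp only [← Matrix.nonsing_inv_eq_ringInverse] at hinv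
  -- compose with the continuous linear map L
  set L' := LinearMap.toContinuousLinearMap L with hL'def
  have hfinal := (L'.hasFDerivAt (x := (mlG vI vJ 0)⁻¹)).comp_hasDerivAt 0 hinv
  -- compute the derivative value
  have hy : Gd *ᵥ (G0⁻¹ *ᵥ b) =
      Sum.elim (A *ᵥ θbI - B *ᵥ (D⁻¹ *ᵥ (C *ᵥ θbI))) (D *ᵥ θbJ - C *ᵥ (A⁻¹ *ᵥ (B *ᵥ θbJ))) := by
    rw [hx, hGddef, Matrix.fromBlocks_mulVec]
    simp only [Sum.elim_comp_inl, Sum.elim_comp_inr, Matrix.neg_mulVec, Matrix.mulVec_add,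
      hAAi, hDDi]
    congr 1 <;> abel
  have hz : (-(G0⁻¹ * Gd * G0⁻¹)) *ᵥ b =
      Sum.elim (A⁻¹ *ᵥ (B *ᵥ (D⁻¹ *ᵥ (C *ᵥ θbI))) - θbI)
        (D⁻¹ *ᵥ (C *ᵥ (A⁻¹ *ᵥ (B *ᵥ θbJ))) - θbJ) := by
    rw [Matrix.neg_mulVec, ← Matrix.mulVec_mulVec, ← Matrix.mulVec_mulVec, hy, hG0inv,
      Matrix.fromBlocks_mulVec]
    simp only [Sum.elim_comp_inl, Sum.elim_comp_inr, Matrix.zero_mulVec, add_zero, zero_add,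
      Matrix.mulVec_sub, hAiA, hDiD]
    funext x
    cases x <;> simp [neg_sub]
  have hLval : L' (-(G0⁻¹ * Gd * G0⁻¹)) =
      A⁻¹ *ᵥ (B *ᵥ (D⁻¹ *ᵥ (C *ᵥ θbI))) - θbI := by
    funext i
    show ((-(G0⁻¹ * Gd * G0⁻¹)) *ᵥ b) (Sum.inl i) = _
    rw [hz]; rfl
  have hfun : (fun ρ => condMeanI vI vJ θbI θbJ ρ) = fun ρ => L' ((mlG vI vJ ρ)⁻¹) := by
    funext ρ; exact hmL ρ
  rw [hfun, ← hLval]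
  exact hfinal
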